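/- Let m be an odd positive integer. Then: (1) the form tr on A_m defined by tr(Σ_{i=0}^{m−1} a_i x^i) = a_{m−1} is k-linear and invariant under the involution, i.e. tr(a*) = tr(a) for all a ∈ A_m; and (2) if * is the non-trivial involution x* = −x, then the k-bilinear form (t,s) ↦ tr(B_Q(t,s)) = tr(t* s + t s*) on A_m is a non-degenerate symmetric bilinear form. -/

import Mathlib

open Polynomial

set_option synthInstance.maxHeartbeats 1000000
set_option maxHeartbeats 1000000

/-- The truncated polynomial algebra `A_m = k[x]/⟨x^m⟩`. -/
abbrev TruncPoly (k : Type*) [Field k] (m : ℕ) :=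
  Polynomial k ⧸ Ideal.span {(Polynomial.X : Polynomial k) ^ m}

/-- The class of `x` in `A_m = k[x]/⟨x^m⟩`. -/
noncomputable def xbar (k : Type*) [Field k] (m : ℕ) : TruncPoly k m :=
  Ideal.Quotient.mk _ (Polynomial.X : Polynomial k)

/-- For `m` odd: (1) the linear form `tr` on `A_m` (picking the
coefficient of `x^{m−1}`) is invariant under the involution `x* = −x`; and (2) the
`k`-bilinear form `(t,s) ↦ tr(t* s + t s*)` is symmetric and non-degenerate. -/
theorem tr_invariant_and_trBQ_nondegenerate
    {k : Type*} [Field k] [Fintype k] (hodd : Odd (Fintype.card k))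
    {m : ℕ} (hm : 0 < m) (hmodd : Odd m)
    (σ : TruncPoly k m →ₐ[k] TruncPoly k m) (hσ : σ (xbar k m) = -xbar k m)
    (tr : TruncPoly k m →ₗ[k] k)
    (htr : ∀ i < m, tr (Ideal.Quotient.mk _ ((Polynomial.X : Polynomial k) ^ i))
      = if i = m - 1 then 1 else 0) :
    (∀ a : TruncPoly k m, tr (σ a) = tr a) ∧
    (∀ t s : TruncPoly k m, tr (σ t * s + t * σ s) = tr (σ s * t + s * σ t)) ∧
    (∀ t : TruncPoly k m, (∀ s : TruncPoly k m, tr (σ t * s + t * σ s) = 0) → t = 0) := by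
  set I : Ideal (Polynomial k) := Ideal.span {(X : Polynomial k) ^ m} with hI
  set mk : Polynomial k →+* TruncPoly k m := Ideal.Quotient.mk I with hmk
  -- char ≠ 2
  have h2 : (2 : k) ≠ 0 := by
    refine Ring.two_ne_zero (fun hc => ?_)
    have := FiniteField.even_card_of_char_two hc
    have := Nat.odd_iff.mp hodd
    omega
  have hxpow : ∀ n : ℕ, mk ((X : Polynomial k) ^ n) = (xbar k m) ^ n := fun n => by
    simp [xbar, map_pow, hmk]
    rfl
  have hxzero : ∀ n : ℕ, m ≤ n → (xbar k m) ^ n = 0 := fun n hn => by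
    rw [← hxpow]
    rw [Ideal.Quotient.eq_zero_iff_mem, hI, Ideal.mem_span_singleton]
    exact pow_dvd_pow X hn
  have htr' : ∀ n : ℕ, tr ((xbar k m) ^ n) = if n = m - 1 then 1 else 0 := by
    intro n
    by_cases hn : n < m
    · rw [← hxpow]; exact htr n hn
    · rw [hxzero n (le_of_not_gt hn), if_neg (by omega), map_zero]
  have hm1even : Even (m - 1) := Nat.Odd.sub_odd hmodd odd_one
  have hmonomial : ∀ (n : ℕ) (a : k),
      mk (monomial n a) = a • (xbar k m) ^ n := by
    intro n a
    rw [← C_mul_X_pow_eq_monomial, map_mul, hxpow]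
    have : mk (C a) = algebraMap k (TruncPoly k m) a := rfl
    rw [this, ← Algebra.smul_def]
  -- tr (mk p) = p.coeff (m-1)
  have htrcoeff : ∀ p : Polynomial k, tr (mk p) = p.coeff (m - 1) := by
    intro p
    induction p using Polynomial.induction_on' with
    | add p q hp hq => rw [map_add, map_add, hp, hq, coeff_add]
    | monomial n a =>
      rw [hmonomial, map_smul, htr', coeff_monomial, smul_eq_mul]
      split <;> simp
  -- statement (1)
  have htrσ : ∀ a : TruncPoly k m, tr (σ a) = tr a := by
    intro a
    obtain ⟨p, rfl⟩ := Ideal.Quotient.mk_surjective (I := I) a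
    induction p using Polynomial.induction_on' with
    | add p q hp hq => rw [map_add, map_add, map_add, map_add, hp, hq]
    | monomial n a =>
      show tr (σ (mk (monomial n a))) = tr (mk (monomial n a))
      rw [hmonomial, map_smul, map_pow, hσ, map_smul, map_smul]
      have hneg : (-xbar k m) ^ n = ((-1 : k) ^ n) • (xbar k m) ^ n := by
        rw [← _root_.smul_pow, neg_one_smul]
      rw [hneg, map_smul, htr', smul_eq_mul, smul_eq_mul, smul_eq_mul]
      by_cases hn : n = m - 1
      · simp [hn, hm1even.neg_one_pow]
      · simp [hn]
  -- σ is an involution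
  have hσσ : ∀ a : TruncPoly k m, σ (σ a) = a := by
    intro a
    obtain ⟨p, rfl⟩ := Ideal.Quotient.mk_surjective (I := I) a
    induction p using Polynomial.induction_on' with
    | add p q hp hq => rw [map_add, map_add, map_add, hp, hq]
    | monomial n a =>
      show σ (σ (mk (monomial n a))) = mk (monomial n a)
      rw [hmonomial, map_smul, map_smul, map_pow, map_pow, hσ, map_neg, hσ, neg_neg]
  -- nondegeneracy core
  have hcore : ∀ u : TruncPoly k m, (∀ j : ℕ, tr (u * (xbar k m) ^ j) = 0) → u = 0 := by
    intro u hu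
    obtain ⟨p, rfl⟩ := Ideal.Quotient.mk_surjective (I := I) u
    have hc : ∀ i < m, p.coeff i = 0 := by
      intro i hi
      have hj := hu (m - 1 - i)
      rw [← hxpow, ← map_mul, htrcoeff, coeff_mul_X_pow'] at hj
      rw [if_pos (by omega)] at hj
      have : m - 1 - (m - 1 - i) = i := by omega
      rwa [this] at hj
    have hdvd : (X : Polynomial k) ^ m ∣ p := (X_pow_dvd_iff).mpr hc
    rw [Ideal.Quotient.eq_zero_iff_mem, hI, Ideal.mem_span_singleton]
    exact hdvd
  refine ⟨htrσ, fun t s => by congr 1; ring, ?_⟩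
  intro t h
  have h1 : ∀ s, tr (t * σ s) = tr (σ t * s) := by
    intro s
    conv_rhs => rw [← htrσ (σ t * s)]
    rw [map_mul σ, hσσ]
  have h2' : ∀ s, tr (σ t * s) = 0 := by
    intro s
    have hs := h s
    rw [map_add, h1] at hs
    have : (2 : k) * tr (σ t * s) = 0 := by rw [two_mul]; exact hs
    exact (mul_eq_zero.mp this).resolve_left h2
  have hσt : σ t = 0 := hcore (σ t) (fun j => h2' ((xbar k m) ^ j))
  have := hσσ t
  rw [hσt, map_zero] at this
  exact this.symm
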